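/- arXiv:1809.05794 — 4 statements merged into one kernel-verified Lean document; each statement's English description precedes it below -/
import Mathlib

section
/- Let w̄ = (ᾱ, β̄, (ū^t, v̄^t)_{t∈T}) be a CGLP solution and suppose Ã contains the identity. Then there exists a set J ⊆ {1,…,q} with |J| = n such that the n×n submatrix Ã_J is nonsingular and ū^t_j = 0 for all j ∉ J and all t ∈ T, if and only if the submatrix Ã_{N(ū)} has full row rank, i.e., rank(Ã_{N(ū)}) = |N(ū)|. -/
open Matrix

/-- Rank of the submatrix of `A` with rows indexed by `N`. -/
noncomputable def subRank {q n : ℕ} (A : Matrix (Fin q) (Fin n) ℝ) (N : Finset (Fin q)) : ℕ :=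
  (A.submatrix (fun i : {x // x ∈ N} => (i : Fin q)) id).rank

open Classical in
/-- The support `N(u)` of a family of multipliers `u = (u^t)_{t ∈ T}`. -/
noncomputable def supp {q : ℕ} {T : Type} [Fintype T] (u : T → Fin q → ℝ) : Finset (Fin q) :=
  Finset.univ.filter fun j => ∃ t, 0 < u t j

/-- `A` contains the identity: every standard basis row vector appears as a row of `A`. -/
def ContainsId {q n : ℕ} (A : Matrix (Fin q) (Fin n) ℝ) : Prop :=
  ∀ j : Fin n, ∃ i : Fin q, A i = Pi.single j 1

/-- A CGLP solution for the data `A, b, D, d`. -/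
def IsCGLP {q n r : ℕ} {T : Type} [Fintype T]
    (A : Matrix (Fin q) (Fin n) ℝ) (b : Fin q → ℝ)
    (D : T → Matrix (Fin r) (Fin n) ℝ) (d : T → Fin r → ℝ)
    (α : Fin n → ℝ) (β : ℝ) (u : T → Fin q → ℝ) (v : T → Fin r → ℝ) : Prop :=
  (∀ t, α = Matrix.vecMul (u t) A + Matrix.vecMul (v t) (D t)) ∧
  (∀ t, β = u t ⬝ᵥ b + v t ⬝ᵥ d t) ∧
  (∀ t j, 0 ≤ u t j) ∧ (∀ t i, 0 ≤ v t i) ∧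
  (∑ t, (∑ j, u t j + ∑ i, v t i)) = 1

lemma subRank_eq_card_iff {q n : ℕ} (A : Matrix (Fin q) (Fin n) ℝ) (N : Finset (Fin q)) :
    subRank A N = N.card ↔ LinearIndependent ℝ (fun i : {x // x ∈ N} => A i) := by
  classical
  rw [linearIndependent_iff_card_eq_finrank_span, Set.finrank, subRank,
    Matrix.rank_eq_finrank_span_row, Fintype.card_coe]
  constructor
  · intro h; rw [← h]; rfl
  · intro h; rw [h]; rfl

/-- For a CGLP solution `(ᾱ, β̄, (ū^t, v̄^t))` with `Ã` containing the
identity, there is a set `J` of `n` row indices with `Ã_J` nonsingular and all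
multipliers `ū^t_j` vanishing outside `J`, if and only if the submatrix of `Ã`
on the rows in the support `N(ū)` has full row rank. -/
theorem stmt_0 {q n r : ℕ} {T : Type} [Fintype T] [Nonempty T]
    (hq : 0 < q) (hn : 0 < n) (hr : 0 < r)
    (A : Matrix (Fin q) (Fin n) ℝ) (b : Fin q → ℝ)
    (D : T → Matrix (Fin r) (Fin n) ℝ) (d : T → Fin r → ℝ)
    (αbar : Fin n → ℝ) (βbar : ℝ) (ubar : T → Fin q → ℝ) (vbar : T → Fin r → ℝ)
    (hsol : IsCGLP A b D d αbar βbar ubar vbar)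
    (hid : ContainsId A) :
    (∃ J : Finset (Fin q), J.card = n ∧ subRank A J = n ∧
        ∀ t, ∀ j ∉ J, ubar t j = 0) ↔
      subRank A (supp ubar) = (supp ubar).card := by
  classical
  have hmem : ∀ j, j ∈ supp ubar ↔ ∃ t, 0 < ubar t j := by
    intro j; simp [supp]
  constructor
  · rintro ⟨J, hcard, hrank, hzero⟩
    have hsub : supp ubar ⊆ J := by
      intro j hj
      by_contra hjJ
      obtain ⟨t, ht⟩ := (hmem j).1 hj
      exact absurd (hzero t j hjJ) (ne_of_gt ht)
    have hJli : LinearIndependent ℝ (fun i : {x // x ∈ J} => A i) :=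
      (subRank_eq_card_iff A J).1 (by rw [hcard, hrank])
    have hinj : Function.Injective
        (fun i : {x // x ∈ supp ubar} => (⟨i.1, hsub i.2⟩ : {x // x ∈ J})) := by
      intro a c hac
      have : (a : Fin q) = (c : Fin q) :=
        congrArg (Subtype.val : {x // x ∈ J} → Fin q) hac
      exact Subtype.ext this
    exact (subRank_eq_card_iff A _).2 (hJli.comp _ hinj)
  · intro hfull
    have hNli : LinearIndependent ℝ (fun i : {x // x ∈ supp ubar} => A i) :=
      (subRank_eq_card_iff A _).1 hfull
    have hAinj : ∀ i ∈ supp ubar, ∀ j ∈ supp ubar, A i = A j → i = j := by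
      intro i hi j hj hij
      have := hNli.injective (a₁ := ⟨i, hi⟩) (a₂ := ⟨j, hj⟩) hij
      exact congrArg Subtype.val this
    set s : Set (Fin n → ℝ) := A '' (supp ubar : Set (Fin q)) with hs_def
    have hsli : LinearIndependent ℝ ((↑) : s → (Fin n → ℝ)) := LinearIndepOn.id_image (v := A) hNli
    have hst : s ⊆ Set.range A := by rintro x ⟨j, _, rfl⟩; exact ⟨j, rfl⟩
    set bs : Set (Fin n → ℝ) := LinearIndepOn.extend (v := id) (s := s) hsli hst with hbs_def
    have hbsub : bs ⊆ Set.range A := LinearIndepOn.extend_subset (v := id) (s := s) hsli hst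
    have hsbs : s ⊆ bs := LinearIndepOn.subset_extend (v := id) (s := s) hsli hst
    have hbli : LinearIndependent ℝ ((↑) : bs → (Fin n → ℝ)) :=
      LinearIndepOn.linearIndepOn_extend (v := id) (s := s) hsli hst
    have hspan : Submodule.span ℝ bs = ⊤ := by
      rw [LinearIndepOn.span_extend_eq_span (s := s) hsli hst, eq_top_iff,
        ← (Pi.basisFun ℝ (Fin n)).span_eq]
      apply Submodule.span_mono
      rintro x ⟨j, rfl⟩
      rw [Pi.basisFun_apply]
      obtain ⟨i, hi⟩ := hid j
      exact ⟨i, hi⟩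
    have hfin : bs.Finite := hbli.setFinite
    haveI : Fintype bs := hfin.fintype
    have hcardb : Fintype.card bs = n := by
      have := linearIndependent_iff_card_eq_finrank_span.1 hbli
      rw [Subtype.range_coe, Set.finrank, hspan, finrank_top,
        Module.finrank_fintype_fun_eq_card, Fintype.card_fin] at this
      exact this
    -- choose preimage indices
    have hpick : ∀ x : bs, ∃ i : Fin q, A i = x ∧ ((x : Fin n → ℝ) ∈ s → i ∈ supp ubar) := by
      rintro ⟨x, hx⟩
      by_cases hxs : x ∈ s
      · obtain ⟨j, hj, rfl⟩ := hxs
        exact ⟨j, rfl, fun _ => hj⟩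
      · obtain ⟨i, hi⟩ := hbsub hx
        exact ⟨i, hi, fun h => absurd h hxs⟩
    choose f hf1 hf2 using hpick
    have hfinj : Function.Injective f := by
      intro x y hxy
      have : (x : Fin n → ℝ) = y := by rw [← hf1 x, ← hf1 y, hxy]
      exact Subtype.ext this
    refine ⟨Finset.univ.image f, ?_, ?_, ?_⟩
    · rw [Finset.card_image_of_injective _ hfinj, Finset.card_univ, hcardb]
    · -- subRank = n
      have hmemJ : ∀ i, i ∈ Finset.univ.image f → A i ∈ bs := by
        intro i hi
        obtain ⟨x, -, rfl⟩ := Finset.mem_image.1 hi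
        rw [hf1 x]; exact x.2
      have hφinj : Function.Injective
          (fun i : {x // x ∈ Finset.univ.image f} => (⟨A i.1, hmemJ i.1 i.2⟩ : bs)) := by
        rintro ⟨i, hi⟩ ⟨j, hj⟩ hij
        have hAij : A i = A j := congrArg Subtype.val hij
        obtain ⟨x, -, rfl⟩ := Finset.mem_image.1 hi
        obtain ⟨y, -, rfl⟩ := Finset.mem_image.1 hj
        have : x = y := by
          apply Subtype.ext
          rw [← hf1 x, ← hf1 y]; exact hAij
        simp [this]
      have := hbli.comp _ hφinj
      have hli : LinearIndependent ℝ (fun i : {x // x ∈ Finset.univ.image f} => A i.1) := this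
      have := (subRank_eq_card_iff A (Finset.univ.image f)).2 hli
      rw [this, Finset.card_image_of_injective _ hfinj, Finset.card_univ, hcardb]
    · -- vanishing outside J
      intro t j hjJ
      by_contra h
      have hpos : 0 < ubar t j := lt_of_le_of_ne (hsol.2.2.1 t j) (Ne.symm h)
      have hjsupp : j ∈ supp ubar := (hmem j).2 ⟨t, hpos⟩
      -- then j ∈ image f
      have hxs : A j ∈ s := ⟨j, hjsupp, rfl⟩
      have hxb : A j ∈ bs := hsbs hxs
      set x : bs := ⟨A j, hxb⟩
      have hfx : f x ∈ supp ubar := hf2 x hxs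
      have : f x = j := hAinj _ hfx _ hjsupp (by rw [hf1 x])
      exact hjJ (Finset.mem_image.2 ⟨x, Finset.mem_univ x, this⟩)
end

section
/- Suppose Ã contains the identity. Let B be a finite nonempty set, let λ : B → ℝ satisfy λ_b > 0 for all b ∈ B and Σ_{b∈B} λ_b = 1, and for each b ∈ B and t ∈ T let u^{b,t} ∈ ℝ^q be nonnegative; define ū^t := Σ_{b∈B} λ_b u^{b,t} for each t ∈ T. If the rows of Ã indexed by N(ū) are linearly independent, then there exists a set J ⊆ {1,…,q} with |J| = n and Ã_J nonsingular such that N(u^b) ⊆ J for every b ∈ B, where u^b denotes the family (u^{b,t})_{t∈T}. -/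
open Matrix

lemma mem_supp {q : ℕ} {T : Type} [Fintype T] (u : T → Fin q → ℝ) (j : Fin q) :
    j ∈ supp u ↔ ∃ t, 0 < u t j := by
  classical
  simp [supp]

/-- Let `ū^t = Σ_b λ_b u^{b,t}` be a proper convex combination of
nonnegative multiplier families. If the rows of `Ã` indexed by `N(ū)` are linearly
independent, then there is a set `J` of `n` row indices with `Ã_J` nonsingular
containing the support `N(u^b)` of every `b ∈ B`. -/
theorem stmt_3 {q n : ℕ} {T B : Type} [Fintype T] [Nonempty T] [Fintype B] [Nonempty B]
    (hq : 0 < q) (hn : 0 < n)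
    (A : Matrix (Fin q) (Fin n) ℝ) (hid : ContainsId A)
    (lam : B → ℝ) (hlam : ∀ b, 0 < lam b) (hsum : ∑ b, lam b = 1)
    (u : B → T → Fin q → ℝ) (hu : ∀ b t j, 0 ≤ u b t j)
    (ubar : T → Fin q → ℝ) (hubar : ∀ t j, ubar t j = ∑ b, lam b * u b t j)
    (hli : LinearIndependent ℝ (fun i : {x // x ∈ supp ubar} => A i.val)) :
    ∃ J : Finset (Fin q), J.card = n ∧ subRank A J = n ∧ ∀ b, supp (u b) ⊆ J := by
  classical
  set S : Finset (Fin q) := supp ubar with hS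
  -- each support is contained in S
  have hsub : ∀ b0, supp (u b0) ⊆ S := by
    intro b0 i hi
    rw [mem_supp] at hi
    rw [hS, mem_supp]
    obtain ⟨t, ht⟩ := hi
    refine ⟨t, ?_⟩
    rw [hubar]
    exact Finset.sum_pos' (fun b _ => mul_nonneg (hlam b).le (hu b t i))
      ⟨b0, Finset.mem_univ _, mul_pos (hlam b0) ht⟩
  -- A is injective on S
  have hinjS : Set.InjOn A (↑S : Set (Fin q)) := by
    intro i hi j hj hij
    have := hli.injective (a₁ := ⟨i, hi⟩) (a₂ := ⟨j, hj⟩) hij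
    exact congrArg Subtype.val this
  -- image of S rows is linearly independent
  have hImg : LinearIndependent ℝ ((↑) : (A '' (↑S : Set (Fin q))) → (Fin n → ℝ)) :=
    LinearIndepOn.id_image (v := A) (s := (↑S : Set (Fin q))) hli
  have hst : A '' (↑S : Set (Fin q)) ⊆ Set.range A := Set.image_subset_range _ _
  obtain ⟨bs, hbt, hsb, htb, hbind⟩ := exists_linearIndepOn_id_extension hImg hst
  replace hbind : LinearIndependent ℝ ((↑) : bs → (Fin n → ℝ)) := hbind
  -- bs spans everything
  have hspan : Submodule.span ℝ bs = ⊤ := by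
    rw [eq_top_iff]
    have h1 : Submodule.span ℝ (Set.range A) ≤ Submodule.span ℝ bs :=
      Submodule.span_le.2 htb
    have h2 : (⊤ : Submodule ℝ (Fin n → ℝ)) ≤ Submodule.span ℝ (Set.range A) := by
      rw [← (Pi.basisFun ℝ (Fin n)).span_eq]
      refine Submodule.span_le.2 ?_
      rintro v ⟨j, rfl⟩
      obtain ⟨i, hi⟩ := hid j
      rw [Pi.basisFun_apply, ← hi]
      exact Submodule.subset_span ⟨i, rfl⟩
    exact h2.trans h1
  have hbsfin : bs.Finite := (Set.finite_range A).subset hbt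
  haveI : Fintype bs := hbsfin.fintype
  -- a basis from bs
  let basis : Module.Basis bs ℝ (Fin n → ℝ) :=
    Module.Basis.mk hbind (by rw [Subtype.range_coe, hspan])
  have hcard : (hbsfin.toFinset).card = n := by
    rw [Set.Finite.card_toFinset]
    have := Module.finrank_eq_card_basis basis
    simp only [Module.finrank_fin_fun] at this
    omega
  -- choice of row index for each vector in bs
  have hgex : ∀ v ∈ bs, ∃ i : Fin q, A i = v ∧ (v ∈ A '' (↑S : Set (Fin q)) → i ∈ S) := by
    intro v hv
    by_cases h : v ∈ A '' (↑S : Set (Fin q))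
    · obtain ⟨i, hiS, hiv⟩ := h
      exact ⟨i, hiv, fun _ => hiS⟩
    · obtain ⟨i, hiv⟩ := hbt hv
      exact ⟨i, hiv, fun hc => absurd hc h⟩
  let g : (Fin n → ℝ) → Fin q := fun v =>
    if h : v ∈ bs then (hgex v h).choose else ⟨0, hq⟩
  have hg1 : ∀ v ∈ bs, A (g v) = v := by
    intro v hv
    simp only [g, dif_pos hv]
    exact (hgex v hv).choose_spec.1
  have hg2 : ∀ v (hv : v ∈ bs), v ∈ A '' (↑S : Set (Fin q)) → g v ∈ S := by
    intro v hv h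
    simp only [g, dif_pos hv]
    exact (hgex v hv).choose_spec.2 h
  set J : Finset (Fin q) := hbsfin.toFinset.image g with hJ
  have hgiJ : Set.InjOn g ↑hbsfin.toFinset := by
    intro v hv w hw hvw
    rw [Set.Finite.coe_toFinset] at hv hw
    rw [← hg1 v hv, ← hg1 w hw, hvw]
  have hcardJ : J.card = n := by
    rw [hJ, Finset.card_image_of_injOn hgiJ, hcard]
  -- rows indexed by J are linearly independent
  have hAJ : ∀ i ∈ J, A i ∈ bs := by
    intro i hi
    rw [hJ, Finset.mem_image] at hi
    obtain ⟨v, hv, rfl⟩ := hi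
    rw [Set.Finite.mem_toFinset] at hv
    rw [hg1 v hv]; exact hv
  have hliJ : LinearIndependent ℝ (fun i : {x // x ∈ J} => A i.val) := by
    have : (fun i : {x // x ∈ J} => A i.val) =
        ((↑) : bs → (Fin n → ℝ)) ∘ (fun i : {x // x ∈ J} => ⟨A i.val, hAJ i.val i.2⟩) := rfl
    rw [this]
    refine hbind.comp _ ?_
    intro i j hij
    have h' : A i.val = A j.val := congrArg Subtype.val hij
    have hi2 : i.val ∈ Finset.image g hbsfin.toFinset := hJ ▸ i.2
    have hj2 : j.val ∈ Finset.image g hbsfin.toFinset := hJ ▸ j.2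
    obtain ⟨vi, hvi, hvi'⟩ := Finset.mem_image.1 hi2
    obtain ⟨vj, hvj, hvj'⟩ := Finset.mem_image.1 hj2
    rw [Set.Finite.mem_toFinset] at hvi hvj
    have : vi = vj := by
      rw [← hg1 vi hvi, ← hg1 vj hvj, hvi', hvj', h']
    ext
    rw [← hvi', ← hvj', this]
  have hrank : subRank A J = n := by
    have : (A.submatrix (fun i : {x // x ∈ J} => (i : Fin q)) id) =
        Matrix.of (fun i : {x // x ∈ J} => A i.val) := rfl
    rw [subRank, this]
    have := LinearIndependent.rank_matrix (M := Matrix.of (fun i : {x // x ∈ J} => A i.val)) hliJ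
    rw [this, Fintype.card_coe, hcardJ]
  refine ⟨J, hcardJ, hrank, fun b0 => (hsub b0).trans ?_⟩
  -- S ⊆ J
  intro i hi
  have hAi : A i ∈ bs := hsb ⟨i, hi, rfl⟩
  have : g (A i) = i := by
    have h1 : A (g (A i)) = A i := hg1 _ hAi
    have h2 : g (A i) ∈ S := hg2 _ hAi ⟨i, hi, rfl⟩
    exact hinjS h2 hi h1
  rw [hJ, Finset.mem_image]
  exact ⟨A i, (Set.Finite.mem_toFinset _).2 hAi, this⟩
end

section
/- Let w̄ = (ᾱ, β̄, (ū^t, v̄^t)_{t∈T}) be a CGLP solution that is extended regular. Then the tuple (θ, δ, (u^t, v^t)_{t∈T}) with θ = 1, δ ∈ {0,1}^q the indicator vector of N(ū), u^t = ū^t and v^t = v̄^t for all t ∈ T, is an RCV solution for (ᾱ, β̄). Consequently, since θ ≤ 1 for every RCV solution, the maximum value of θ over RCV solutions for (ᾱ, β̄) equals 1. -/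
open Matrix

/-- An extended regular CGLP solution: a CGLP solution whose submatrix of `A` on the
rows in the support `N(u)` has full row rank. -/
noncomputable def IsExtReg {q n r : ℕ} {T : Type} [Fintype T]
    (A : Matrix (Fin q) (Fin n) ℝ) (b : Fin q → ℝ)
    (D : T → Matrix (Fin r) (Fin n) ℝ) (d : T → Fin r → ℝ)
    (α : Fin n → ℝ) (β : ℝ) (u : T → Fin q → ℝ) (v : T → Fin r → ℝ) : Prop :=
  IsCGLP A b D d α β u v ∧ subRank A (supp u) = (supp u).card

/-- An RCV solution for the cut `(ᾱ, β̄)`. -/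
def IsRCV {q n r : ℕ} {T : Type} [Fintype T]
    (A : Matrix (Fin q) (Fin n) ℝ) (b : Fin q → ℝ)
    (D : T → Matrix (Fin r) (Fin n) ℝ) (d : T → Fin r → ℝ)
    (αbar : Fin n → ℝ) (βbar : ℝ)
    (θ : ℝ) (δ : Fin q → ℝ) (u : T → Fin q → ℝ) (v : T → Fin r → ℝ) : Prop :=
  0 ≤ θ ∧ θ ≤ 1 ∧ (∀ j, δ j = 0 ∨ δ j = 1) ∧
  (∀ t j, 0 ≤ u t j) ∧ (∀ t i, 0 ≤ v t i) ∧
  (∀ t, θ • αbar = Matrix.vecMul (u t) A + Matrix.vecMul (v t) (D t)) ∧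
  (∀ t, θ * βbar = u t ⬝ᵥ b + v t ⬝ᵥ d t) ∧
  (∀ t j, u t j ≤ δ j) ∧
  (∑ j, δ j) ≤ (n : ℝ) ∧
  (∀ N : Finset (Fin q), ∑ j ∈ N, δ j ≤ (subRank A N : ℝ))

lemma subRank_eq_finrank {q n : ℕ} (A : Matrix (Fin q) (Fin n) ℝ) (N : Finset (Fin q)) :
    subRank A N = Module.finrank ℝ
      (Submodule.span ℝ (Set.range (fun i : {x // x ∈ N} => A (i : Fin q)))) := by
  unfold subRank
  rw [Matrix.rank_eq_finrank_span_row]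
  rfl

lemma subRank_mono {q n : ℕ} (A : Matrix (Fin q) (Fin n) ℝ) {M N : Finset (Fin q)}
    (h : M ⊆ N) : subRank A M ≤ subRank A N := by
  rw [subRank_eq_finrank, subRank_eq_finrank]
  apply Submodule.finrank_mono
  apply Submodule.span_mono
  rintro x ⟨⟨i, hi⟩, rfl⟩
  exact ⟨⟨i, h hi⟩, rfl⟩

lemma card_le_subRank {q n : ℕ} (A : Matrix (Fin q) (Fin n) ℝ) {S M : Finset (Fin q)}
    (hS : subRank A S = S.card) (hM : M ⊆ S) : M.card ≤ subRank A M := by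
  -- rows of S are linearly independent
  have hli : LinearIndependent ℝ (fun i : {x // x ∈ S} => A (i : Fin q)) := by
    rw [linearIndependent_iff_card_eq_finrank_span]
    rw [subRank_eq_finrank] at hS
    rw [Fintype.card_coe]
    exact hS.symm
  have hliM : LinearIndependent ℝ (fun i : {x // x ∈ M} => A (i : Fin q)) := by
    have : (fun i : {x // x ∈ M} => A (i : Fin q)) =
        (fun i : {x // x ∈ S} => A (i : Fin q)) ∘ (fun i => ⟨i.1, hM i.2⟩) := rfl
    rw [this]
    refine hli.comp _ ?_
    intro a b hab
    exact Subtype.ext (Subtype.mk_eq_mk.mp hab)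
  rw [subRank_eq_finrank]
  rw [linearIndependent_iff_card_eq_finrank_span] at hliM
  rw [Set.finrank] at hliM
  rw [← hliM, Fintype.card_coe]

/-- An extended regular CGLP solution `(ᾱ, β̄, (ū^t, v̄^t))` yields the
RCV solution `(1, 1_{N(ū)}, (ū^t, v̄^t))` for `(ᾱ, β̄)`; consequently the maximum of
`θ` over all RCV solutions for `(ᾱ, β̄)` equals `1`. -/
theorem stmt_6 {q n r : ℕ} {T : Type} [Fintype T] [Nonempty T]
    (hq : 0 < q) (hn : 0 < n) (hr : 0 < r)
    (A : Matrix (Fin q) (Fin n) ℝ) (b : Fin q → ℝ)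
    (D : T → Matrix (Fin r) (Fin n) ℝ) (d : T → Fin r → ℝ)
    (αbar : Fin n → ℝ) (βbar : ℝ) (ubar : T → Fin q → ℝ) (vbar : T → Fin r → ℝ)
    (hreg : IsExtReg A b D d αbar βbar ubar vbar) :
    IsRCV A b D d αbar βbar 1 (fun j => if j ∈ supp ubar then (1 : ℝ) else 0) ubar vbar ∧
      IsGreatest {θ : ℝ | ∃ δ u v, IsRCV A b D d αbar βbar θ δ u v} 1 := by
  classical
  obtain ⟨⟨hα, hβ, hu, hv, hnorm⟩, hrank⟩ := hreg
  -- support membership characterisation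
  have hmem : ∀ j, j ∈ supp ubar ↔ ∃ t, 0 < ubar t j := by
    intro j
    simp [supp]
  -- each u t j ≤ 1
  have hone : ∀ t j, ubar t j ≤ 1 := by
    intro t j
    rw [← hnorm]
    calc ubar t j ≤ ∑ j', ubar t j' :=
          Finset.single_le_sum (fun j' _ => hu t j') (Finset.mem_univ j)
      _ ≤ ∑ j', ubar t j' + ∑ i, vbar t i := by
          have : (0:ℝ) ≤ ∑ i, vbar t i := Finset.sum_nonneg fun i _ => hv t i
          linarith
      _ ≤ ∑ t', (∑ j', ubar t' j' + ∑ i, vbar t' i) := by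
          refine Finset.single_le_sum (f := fun t' => ∑ j', ubar t' j' + ∑ i, vbar t' i)
            (fun t' _ => ?_) (Finset.mem_univ t)
          exact add_nonneg (Finset.sum_nonneg fun j' _ => hu t' j')
            (Finset.sum_nonneg fun i _ => hv t' i)
  -- sums of the indicator
  have hsum : ∀ N : Finset (Fin q),
      (∑ j ∈ N, (if j ∈ supp ubar then (1:ℝ) else 0)) = ((N ∩ supp ubar).card : ℝ) := by
    intro N
    rw [Finset.sum_ite_mem]
    simp
  have hRCV : IsRCV A b D d αbar βbar 1
      (fun j => if j ∈ supp ubar then (1 : ℝ) else 0) ubar vbar := by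
    refine ⟨zero_le_one, le_refl 1, ?_, hu, hv, ?_, ?_, ?_, ?_, ?_⟩
    · intro j; by_cases h : j ∈ supp ubar <;> simp [h]
    · intro t; rw [one_smul]; exact hα t
    · intro t; rw [one_mul]; exact hβ t
    · intro t j
      by_cases h : j ∈ supp ubar
      · simp only [h, if_pos]
        exact hone t j
      · simp only [h, if_neg, if_false]
        have : ¬ ∃ t', 0 < ubar t' j := by rwa [← hmem j]
        push_neg at this
        exact this t
    · have := hsum Finset.univ
      rw [Finset.univ_inter] at this
      rw [this]
      have h1 : (supp ubar).card = subRank A (supp ubar) := hrank.symm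
      have h2 : subRank A (supp ubar) ≤ n := by
        unfold subRank
        have := Matrix.rank_le_card_width
          (A.submatrix (fun i : {x // x ∈ supp ubar} => (i : Fin q)) id)
        simpa using this
      have h3 : (supp ubar).card ≤ n := by rw [← hrank]; exact h2
      exact_mod_cast h3
    · intro N
      rw [hsum N]
      have h1 : (N ∩ supp ubar).card ≤ subRank A (N ∩ supp ubar) :=
        card_le_subRank A hrank (Finset.inter_subset_right)
      have h2 : subRank A (N ∩ supp ubar) ≤ subRank A N :=
        subRank_mono A (Finset.inter_subset_left)
      exact_mod_cast h1.trans h2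
  refine ⟨hRCV, ⟨_, _, _, hRCV⟩, ?_⟩
  rintro θ ⟨δ, u, v, hθ⟩
  exact hθ.2.1
end

section
/- Suppose (ᾱ, β̄) ≠ (0, 0) and let (θ, δ, (u^t, v^t)_{t∈T}) be an RCV solution for (ᾱ, β̄) with θ > 0. Then σ := Σ_{t∈T}(Σ_{i=1}^q u^t_i + Σ_{i=1}^r v^t_i) > 0, and the tuple ((θ/σ)ᾱ, (θ/σ)β̄, ((1/σ)u^t, (1/σ)v^t)_{t∈T}) is an extended regular CGLP solution. In particular there exist μ > 0 and an extended regular CGLP solution whose (α, β)-component equals (μᾱ, μβ̄). -/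
open Matrix

/-- If `(ᾱ, β̄) ≠ (0, 0)` and `(θ, δ, (u^t, v^t))` is an RCV solution for
`(ᾱ, β̄)` with `θ > 0`, then `σ := Σ_t (Σ_i u^t_i + Σ_i v^t_i) > 0` and
`((θ/σ)ᾱ, (θ/σ)β̄, ((1/σ)u^t, (1/σ)v^t))` is an extended regular CGLP solution;
in particular some positive multiple `(μᾱ, μβ̄)` is the cut of an extended regular
CGLP solution. -/
theorem stmt_7 {q n r : ℕ} {T : Type} [Fintype T] [Nonempty T]
    (hq : 0 < q) (hn : 0 < n) (hr : 0 < r)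
    (A : Matrix (Fin q) (Fin n) ℝ) (b : Fin q → ℝ)
    (D : T → Matrix (Fin r) (Fin n) ℝ) (d : T → Fin r → ℝ)
    (αbar : Fin n → ℝ) (βbar : ℝ)
    (hne : ¬ (αbar = 0 ∧ βbar = 0))
    (θ : ℝ) (δ : Fin q → ℝ) (u : T → Fin q → ℝ) (v : T → Fin r → ℝ)
    (hrcv : IsRCV A b D d αbar βbar θ δ u v) (hθ : 0 < θ)
    (σ : ℝ) (hσ : σ = ∑ t, (∑ j, u t j + ∑ i, v t i)) :
    0 < σ ∧
      IsExtReg A b D d ((θ / σ) • αbar) ((θ / σ) * βbar)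
        (fun t => (1 / σ) • u t) (fun t => (1 / σ) • v t) ∧
      ∃ μ : ℝ, 0 < μ ∧ ∃ u' : T → Fin q → ℝ, ∃ v' : T → Fin r → ℝ,
        IsExtReg A b D d (μ • αbar) (μ * βbar) u' v' := by
  classical
  obtain ⟨hθ0, hθ1, hδ01, hu0, hv0, hα, hβ, huδ, hδn, hδrank⟩ := hrcv
  -- σ > 0
  have hσ0 : 0 < σ := by
    rcases lt_or_eq_of_le (show (0:ℝ) ≤ σ by
      rw [hσ]
      exact Finset.sum_nonneg fun t _ => add_nonneg
        (Finset.sum_nonneg fun j _ => hu0 t j)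
        (Finset.sum_nonneg fun i _ => hv0 t i)) with h | h
    · exact h
    · exfalso
      -- all u, v are zero
      have hall : ∀ t, (∀ j, u t j = 0) ∧ (∀ i, v t i = 0) := by
        intro t
        have hterm : ∀ t ∈ (Finset.univ : Finset T),
            (∑ j, u t j + ∑ i, v t i) = 0 := by
          have := hσ.symm.trans h.symm
          intro t' _
          have hnn : ∀ t'' ∈ (Finset.univ : Finset T),
              0 ≤ (∑ j, u t'' j + ∑ i, v t'' i) := fun t'' _ => add_nonneg
            (Finset.sum_nonneg fun j _ => hu0 t'' j)
            (Finset.sum_nonneg fun i _ => hv0 t'' i)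
          exact (Finset.sum_eq_zero_iff_of_nonneg hnn).mp this t' (Finset.mem_univ _)
        have ht := hterm t (Finset.mem_univ t)
        have hus : (∑ j, u t j) = 0 ∧ (∑ i, v t i) = 0 := by
          constructor
          · nlinarith [Finset.sum_nonneg fun j (_ : j ∈ Finset.univ) => hu0 t j,
              Finset.sum_nonneg fun i (_ : i ∈ Finset.univ) => hv0 t i]
          · nlinarith [Finset.sum_nonneg fun j (_ : j ∈ Finset.univ) => hu0 t j,
              Finset.sum_nonneg fun i (_ : i ∈ Finset.univ) => hv0 t i]
        constructor
        · intro j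
          exact (Finset.sum_eq_zero_iff_of_nonneg (fun j _ => hu0 t j)).mp hus.1 j
            (Finset.mem_univ _)
        · intro i
          exact (Finset.sum_eq_zero_iff_of_nonneg (fun i _ => hv0 t i)).mp hus.2 i
            (Finset.mem_univ _)
      obtain ⟨t⟩ := ‹Nonempty T›
      have hu' : u t = 0 := funext (hall t).1
      have hv' : v t = 0 := funext (hall t).2
      have h1 := hα t
      have h2 := hβ t
      rw [hu', hv'] at h1 h2
      simp [Matrix.zero_vecMul, zero_dotProduct] at h1 h2
      apply hne
      constructor
      · have := h1
        rcases this with h1 | h1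
        · exact absurd h1 (ne_of_gt hθ)
        · exact h1
      · rcases h2 with h2 | h2
        · exact absurd h2 (ne_of_gt hθ)
        · exact h2
  have hσne : σ ≠ 0 := ne_of_gt hσ0
  -- support equality
  have hsupp : supp (fun t => (1 / σ) • u t) = supp u := by
    unfold supp
    apply Finset.filter_congr
    intro j _
    simp only [Pi.smul_apply, smul_eq_mul]
    constructor
    · rintro ⟨t, ht⟩
      refine ⟨t, ?_⟩
      by_contra hle
      push_neg at hle
      have : 1 / σ * u t j ≤ 0 :=
        mul_nonpos_of_nonneg_of_nonpos (by positivity) hle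
      linarith
    · rintro ⟨t, ht⟩
      exact ⟨t, by positivity⟩
  -- δ j = 1 on the support
  have hδ1 : ∀ j ∈ supp u, δ j = 1 := by
    intro j hj
    simp only [supp, Finset.mem_filter] at hj
    obtain ⟨_, t, ht⟩ := hj
    rcases hδ01 j with h | h
    · exact absurd (lt_of_lt_of_le ht (huδ t j)) (by rw [h]; exact lt_irrefl 0)
    · exact h
  -- rank condition
  have hrank : subRank A (supp u) = (supp u).card := by
    have h1 : ((supp u).card : ℝ) ≤ (subRank A (supp u) : ℝ) := by
      have := hδrank (supp u)
      rwa [Finset.sum_congr rfl hδ1, Finset.sum_const, nsmul_eq_mul, mul_one] at this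
    have h1' : (supp u).card ≤ subRank A (supp u) := by exact_mod_cast h1
    have h2 : subRank A (supp u) ≤ (supp u).card := by
      unfold subRank
      calc (A.submatrix (fun i : {x // x ∈ supp u} => (i : Fin q)) id).rank
          ≤ Fintype.card {x // x ∈ supp u} := Matrix.rank_le_card_height _
        _ = (supp u).card := Fintype.card_coe _
    omega
  have hext : IsExtReg A b D d ((θ / σ) • αbar) ((θ / σ) * βbar)
      (fun t => (1 / σ) • u t) (fun t => (1 / σ) • v t) := by
    refine ⟨⟨?_, ?_, ?_, ?_, ?_⟩, by rw [hsupp]; exact hrank⟩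
    · intro t
      have h := hα t
      calc (θ / σ) • αbar = (1 / σ) • (θ • αbar) := by
            rw [smul_smul]; congr 1; ring
        _ = (1 / σ) • (u t ᵥ* A) + (1 / σ) • (v t ᵥ* D t) := by rw [h, smul_add]
        _ = ((1 / σ) • u t) ᵥ* A + ((1 / σ) • v t) ᵥ* D t := by
            rw [Matrix.smul_vecMul, Matrix.smul_vecMul]
    · intro t
      have h := hβ t
      calc (θ / σ) * βbar = (1 / σ) * (θ * βbar) := by ring
        _ = (1 / σ) * (u t ⬝ᵥ b) + (1 / σ) * (v t ⬝ᵥ d t) := by rw [h, mul_add]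
        _ = ((1 / σ) • u t) ⬝ᵥ b + ((1 / σ) • v t) ⬝ᵥ d t := by
            rw [smul_dotProduct, smul_dotProduct]; rfl
    · intro t j
      simp only [Pi.smul_apply, smul_eq_mul]
      exact mul_nonneg (by positivity) (hu0 t j)
    · intro t i
      simp only [Pi.smul_apply, smul_eq_mul]
      exact mul_nonneg (by positivity) (hv0 t i)
    · simp only [Pi.smul_apply, smul_eq_mul]
      have : ∀ t ∈ (Finset.univ : Finset T),
          (∑ j, 1 / σ * u t j + ∑ i, 1 / σ * v t i)
            = 1 / σ * (∑ j, u t j + ∑ i, v t i) := by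
        intro t _
        rw [mul_add, Finset.mul_sum, Finset.mul_sum]
      rw [Finset.sum_congr rfl this, ← Finset.mul_sum, ← hσ, one_div, inv_mul_cancel₀ hσne]
  exact ⟨hσ0, hext, θ / σ, by positivity, _, _, hext⟩
end
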